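/- Let ζ = (ζ₁,ζ₂,ζ₃) ∈ {−1,0,1}³ with ζ ≠ (0,0,0) and λ₁, λ₂, λ₃ > 0, with f and ∇ as in the context. Then (∇_X f)(Y) = 0 for all X, Y ∈ m if and only if one of the following holds: (ζ₁,ζ₂,ζ₃) = ±(1,−1,1), λ₂ > λ₁ and λ₃ = λ₂ − λ₁; (ζ₁,ζ₂,ζ₃) = ±(1,1,−1) and λ₃ = λ₁ + λ₂; (ζ₁,ζ₂,ζ₃) = ±(1,−1,−1), λ₁ > λ₂ and λ₃ = λ₁ − λ₂. In particular, the flag manifold SU(3)/T_max admits no invariant Kähler f-structures of rank 2 or 4, i.e., none with some ζ_j = 0. -/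

import Mathlib

open ComplexConjugate Matrix

noncomputable section

/-- The matrix D(a,b,c) ∈ su(3): zero diagonal, X₁₂ = a, X₂₁ = −conj a,
X₂₃ = b, X₃₂ = −conj b, X₁₃ = conj c, X₃₁ = −c. -/
def Dm (a b c : ℂ) : Matrix (Fin 3) (Fin 3) ℂ :=
  !![0, a, conj c; -conj a, 0, b; -c, -conj b, 0]

/-- The real Lie algebra su(3) of traceless skew-Hermitian 3×3 complex
matrices (as a set of matrices, with bracket [X,Y] = XY − YX). -/
def su3 : Set (Matrix (Fin 3) (Fin 3) ℂ) :=
  {X | Xᴴ = -X ∧ X.trace = 0}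

/-- h: the diagonal matrices in su(3). -/
def hSet : Set (Matrix (Fin 3) (Fin 3) ℂ) :=
  {X | X ∈ su3 ∧ ∀ i j, i ≠ j → X i j = 0}

/-- m = {D(a,b,c)}. -/
def mSet : Set (Matrix (Fin 3) (Fin 3) ℂ) :=
  {X | ∃ a b c : ℂ, X = Dm a b c}

/-- The three components m₁, m₂, m₃ of m. -/
def mComp : Fin 3 → Set (Matrix (Fin 3) (Fin 3) ℂ) :=
  ![{X | ∃ a : ℂ, X = Dm a 0 0}, {X | ∃ b : ℂ, X = Dm 0 b 0},
    {X | ∃ c : ℂ, X = Dm 0 0 c}]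

/-- ⟨X,Y⟩₀ = −½ Re tr(XY). -/
def inner0 (X Y : Matrix (Fin 3) (Fin 3) ℂ) : ℝ :=
  -(1 / 2) * ((X * Y).trace).re

end

noncomputable section

/-- The m-component of a matrix in su(3) = h ⊕ m (h the diagonal part):
zero out the diagonal. -/
def projm (Z : Matrix (Fin 3) (Fin 3) ℂ) : Matrix (Fin 3) (Fin 3) ℂ :=
  Z - Matrix.diagonal fun i => Z i i

/-- Projections of m onto its components m₁, m₂, m₃. -/
def mProj : Fin 3 → (Matrix (Fin 3) (Fin 3) ℂ → Matrix (Fin 3) (Fin 3) ℂ) :=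
  ![fun X => Dm (X 0 1) 0 0, fun X => Dm 0 (X 1 2) 0, fun X => Dm 0 0 (-(X 2 0))]

/-- The invariant metric g = (λ₁,λ₂,λ₃): g(X,Y) = Σ_j λ_j ⟨X_j, Y_j⟩₀ for
X, Y ∈ m, where X_j is the m_j-component; m₁, m₂, m₃ are mutually
orthogonal. -/
def gmet (lam : Fin 3 → ℝ) (X Y : Matrix (Fin 3) (Fin 3) ℂ) : ℝ :=
  ∑ j : Fin 3, lam j * inner0 (mProj j X) (mProj j Y)

end

noncomputable section

/-- The invariant f-structure with characteristic collection (ζ₁,ζ₂,ζ₃):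
f(D(a,b,c)) = D(ζ₁ia, ζ₂ib, ζ₃ic). -/
def fm (z : Fin 3 → ℝ) (X : Matrix (Fin 3) (Fin 3) ℂ) :
    Matrix (Fin 3) (Fin 3) ℂ :=
  Dm ((z 0 : ℂ) * Complex.I * X 0 1) ((z 1 : ℂ) * Complex.I * X 1 2)
    ((z 2 : ℂ) * Complex.I * (-(X 2 0)))

/-- The Nomizu function α(X,Y) = ½[X,Y]_m + U(X,Y) of the Levi-Civita
connection. -/
def alphaU (U : Matrix (Fin 3) (Fin 3) ℂ → Matrix (Fin 3) (Fin 3) ℂ →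
      Matrix (Fin 3) (Fin 3) ℂ)
    (X Y : Matrix (Fin 3) (Fin 3) ℂ) : Matrix (Fin 3) (Fin 3) ℂ :=
  (1 / 2 : ℝ) • projm ⁅X, Y⁆ + U X Y

/-- The covariant derivative (∇_X f)(Y) = α(X, fY) − f(α(X,Y)). -/
def nablaU (U : Matrix (Fin 3) (Fin 3) ℂ → Matrix (Fin 3) (Fin 3) ℂ →
      Matrix (Fin 3) (Fin 3) ℂ)
    (z : Fin 3 → ℝ) (X Y : Matrix (Fin 3) (Fin 3) ℂ) :
    Matrix (Fin 3) (Fin 3) ℂ :=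
  alphaU U X (fm z Y) - fm z (alphaU U X Y)

/-- The composition tensor T(X,Y) = ¼ f((∇_{fX} f)(fY) − (∇_{f²X} f)(f²Y)). -/
def TU (U : Matrix (Fin 3) (Fin 3) ℂ → Matrix (Fin 3) (Fin 3) ℂ →
      Matrix (Fin 3) (Fin 3) ℂ)
    (z : Fin 3 → ℝ) (X Y : Matrix (Fin 3) (Fin 3) ℂ) :
    Matrix (Fin 3) (Fin 3) ℂ :=
  (1 / 4 : ℝ) • fm z (nablaU U z (fm z X) (fm z Y) -
    nablaU U z (fm z (fm z X)) (fm z (fm z Y)))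

end

noncomputable section

@[simp] lemma Dm_apply_00 (a b c : ℂ) : Dm a b c 0 0 = 0 := rfl
@[simp] lemma Dm_apply_01 (a b c : ℂ) : Dm a b c 0 1 = a := rfl
@[simp] lemma Dm_apply_02 (a b c : ℂ) : Dm a b c 0 2 = conj c := rfl
@[simp] lemma Dm_apply_10 (a b c : ℂ) : Dm a b c 1 0 = -conj a := rfl
@[simp] lemma Dm_apply_11 (a b c : ℂ) : Dm a b c 1 1 = 0 := rfl
@[simp] lemma Dm_apply_12 (a b c : ℂ) : Dm a b c 1 2 = b := rfl
@[simp] lemma Dm_apply_20 (a b c : ℂ) : Dm a b c 2 0 = -c := rfl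
@[simp] lemma Dm_apply_21 (a b c : ℂ) : Dm a b c 2 1 = -conj b := rfl
@[simp] lemma Dm_apply_22 (a b c : ℂ) : Dm a b c 2 2 = 0 := rfl

lemma gmet_Dm (lam : Fin 3 → ℝ) (a b c p q r : ℂ) :
    gmet lam (Dm a b c) (Dm p q r) =
      lam 0 * (a * conj p).re + lam 1 * (b * conj q).re + lam 2 * (c * conj r).re := by
  simp only [gmet, mProj, Fin.sum_univ_three, inner0, Matrix.trace_fin_three,
    Matrix.mul_apply, Matrix.cons_val_zero, Matrix.cons_val_one, Matrix.cons_val_two,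
    Matrix.tail_cons, Matrix.head_cons,
    Dm_apply_00, Dm_apply_01, Dm_apply_02, Dm_apply_10, Dm_apply_11, Dm_apply_12,
    Dm_apply_20, Dm_apply_21, Dm_apply_22]
  simp only [Complex.add_re, Complex.mul_re, Complex.neg_re, Complex.neg_im, Complex.conj_re,
    Complex.conj_im, Complex.zero_re, Complex.zero_im, Complex.mul_im, Complex.add_im, map_zero, map_neg]
  ring

lemma projm_bracket_Dm (a b c p q r : ℂ) :
    projm ⁅Dm a b c, Dm p q r⁆ =
      Dm (conj (b * r - c * q)) (conj (c * p - a * r)) (conj (a * q - b * p)) := by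
  ext i j
  fin_cases i <;> fin_cases j <;>
    simp [projm, Ring.lie_def, Matrix.mul_apply, Fin.sum_univ_three, Matrix.diagonal, Dm] <;>
    ring

/-- explicit U -/
def U0 (lam : Fin 3 → ℝ) (X Y : Matrix (Fin 3) (Fin 3) ℂ) : Matrix (Fin 3) (Fin 3) ℂ :=
  Dm ((((lam 2 - lam 1) / (2 * lam 0) : ℝ) : ℂ) *
        conj (X 1 2 * (-(Y 2 0)) + (-(X 2 0)) * Y 1 2))
     ((((lam 0 - lam 2) / (2 * lam 1) : ℝ) : ℂ) *
        conj (X 0 1 * (-(Y 2 0)) + (-(X 2 0)) * Y 0 1))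
     ((((lam 1 - lam 0) / (2 * lam 2) : ℝ) : ℂ) *
        conj (X 0 1 * Y 1 2 + X 1 2 * Y 0 1))

lemma U0_Dm (lam : Fin 3 → ℝ) (a b c p q r : ℂ) :
    U0 lam (Dm a b c) (Dm p q r) =
      Dm ((((lam 2 - lam 1) / (2 * lam 0) : ℝ) : ℂ) * conj (b * r + c * q))
         ((((lam 0 - lam 2) / (2 * lam 1) : ℝ) : ℂ) * conj (a * r + c * p))
         ((((lam 1 - lam 0) / (2 * lam 2) : ℝ) : ℂ) * conj (a * q + b * p)) := by
  simp only [U0, Dm_apply_01, Dm_apply_12, Dm_apply_20, neg_neg]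

lemma fm_Dm (z : Fin 3 → ℝ) (a b c : ℂ) :
    fm z (Dm a b c) = Dm ((z 0 : ℂ) * Complex.I * a) ((z 1 : ℂ) * Complex.I * b)
      ((z 2 : ℂ) * Complex.I * c) := by
  simp [fm]

lemma Dm_sub (a b c p q r : ℂ) : Dm a b c - Dm p q r = Dm (a - p) (b - q) (c - r) := by
  ext i j; fin_cases i <;> fin_cases j <;> simp [Dm] <;> ring

lemma Dm_eq_zero {a b c : ℂ} (h : Dm a b c = 0) : a = 0 ∧ b = 0 ∧ c = 0 := by
  refine ⟨?_, ?_, ?_⟩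
  · have := congrFun (congrFun h 0) 1; simpa using this
  · have := congrFun (congrFun h 1) 2; simpa using this
  · have := congrFun (congrFun h 2) 0; simpa using this

lemma hU0def (lam : Fin 3 → ℝ) (hlam : ∀ j, 0 < lam j) (a b c p q r u v w : ℂ) :
    2 * gmet lam (U0 lam (Dm a b c) (Dm p q r)) (Dm u v w) =
      gmet lam (Dm a b c) (projm ⁅Dm u v w, Dm p q r⁆) +
        gmet lam (projm ⁅Dm u v w, Dm a b c⁆) (Dm p q r) := by
  have h0 := (hlam 0).ne'
  have h1 := (hlam 1).ne'
  have h2 := (hlam 2).ne'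
  rw [U0_Dm, projm_bracket_Dm, projm_bracket_Dm, gmet_Dm, gmet_Dm, gmet_Dm]
  simp only [Complex.mul_re, Complex.mul_im, Complex.add_re, Complex.add_im,
    Complex.sub_re, Complex.sub_im, Complex.neg_re, Complex.neg_im,
    Complex.conj_re, Complex.conj_im, Complex.ofReal_re, Complex.ofReal_im]
  field_simp
  ring

lemma Dm_mem_mSet (a b c : ℂ) : Dm a b c ∈ mSet := ⟨a, b, c, rfl⟩

lemma Uval (lam : Fin 3 → ℝ) (hlam : ∀ j, 0 < lam j)
    (U : Matrix (Fin 3) (Fin 3) ℂ → Matrix (Fin 3) (Fin 3) ℂ →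
      Matrix (Fin 3) (Fin 3) ℂ)
    (hUmem : ∀ X ∈ mSet, ∀ Y ∈ mSet, U X Y ∈ mSet)
    (hUdef : ∀ X ∈ mSet, ∀ Y ∈ mSet, ∀ Z ∈ mSet,
      2 * gmet lam (U X Y) Z =
        gmet lam X (projm ⁅Z, Y⁆) + gmet lam (projm ⁅Z, X⁆) Y) :
    ∀ X ∈ mSet, ∀ Y ∈ mSet, U X Y = U0 lam X Y := by
  rintro X ⟨a, b, c, rfl⟩ Y ⟨p, q, r, rfl⟩
  obtain ⟨s, t, w, hst⟩ := hUmem _ (Dm_mem_mSet a b c) _ (Dm_mem_mSet p q r)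
  rw [hst, U0_Dm]
  set s' := (((lam 2 - lam 1) / (2 * lam 0) : ℝ) : ℂ) * conj (b * r + c * q) with hs'
  set t' := (((lam 0 - lam 2) / (2 * lam 1) : ℝ) : ℂ) * conj (a * r + c * p) with ht'
  set w' := (((lam 1 - lam 0) / (2 * lam 2) : ℝ) : ℂ) * conj (a * q + b * p) with hw'
  have key : ∀ u v x : ℂ,
      lam 0 * (s * conj u).re + lam 1 * (t * conj v).re + lam 2 * (w * conj x).re =
      lam 0 * (s' * conj u).re + lam 1 * (t' * conj v).re + lam 2 * (w' * conj x).re := by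
    intro u v x
    have h1 := hUdef _ (Dm_mem_mSet a b c) _ (Dm_mem_mSet p q r) _ (Dm_mem_mSet u v x)
    have h2 := hU0def lam hlam a b c p q r u v x
    rw [hst, gmet_Dm] at h1
    rw [U0_Dm, gmet_Dm] at h2
    rw [hs', ht', hw']
    linarith
  have norm0 : ∀ y : ℂ, (y * conj y).re = Complex.normSq y := by
    intro y; rw [Complex.mul_conj]; simp
  have hzero : ∀ y1 y2 : ℂ, (y1 * conj (y1 - y2)).re = (y2 * conj (y1 - y2)).re →
      y1 = y2 := by
    intro y1 y2 h
    have : ((y1 - y2) * conj (y1 - y2)).re = 0 := by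
      simp only [sub_mul, Complex.sub_re] at *; linarith
    rw [norm0] at this
    exact sub_eq_zero.mp (Complex.normSq_eq_zero.mp this)
  have es : s = s' := by
    have h := key (s - s') 0 0
    simp only [map_zero, mul_zero, Complex.zero_re] at h
    exact hzero s s' (mul_left_cancel₀ (hlam 0).ne' (by linarith))
  have et : t = t' := by
    have h := key 0 (t - t') 0
    simp only [map_zero, mul_zero, Complex.zero_re] at h
    exact hzero t t' (mul_left_cancel₀ (hlam 1).ne' (by linarith))
  have ew : w = w' := by
    have h := key 0 0 (w - w')
    simp only [map_zero, mul_zero, Complex.zero_re] at h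
    exact hzero w w' (mul_left_cancel₀ (hlam 2).ne' (by linarith))
  rw [es, et, ew]

lemma Dm_add (a b c p q r : ℂ) : Dm a b c + Dm p q r = Dm (a + p) (b + q) (c + r) := by
  ext i j; fin_cases i <;> fin_cases j <;> simp [Dm] <;> ring

lemma Dm_smul (t : ℝ) (a b c : ℂ) :
    t • Dm a b c = Dm ((t : ℂ) * a) ((t : ℂ) * b) ((t : ℂ) * c) := by
  ext i j; fin_cases i <;> fin_cases j <;>
    simp [Dm, Complex.real_smul, _root_.map_mul, Complex.conj_ofReal] <;> ring

lemma Dm_congr {a b c p q r : ℂ} (h1 : a = p) (h2 : b = q) (h3 : c = r) :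
    Dm a b c = Dm p q r := by rw [h1, h2, h3]

lemma nabla_Dm (z lam : Fin 3 → ℝ) (hlam : ∀ j, 0 < lam j)
    (U : Matrix (Fin 3) (Fin 3) ℂ → Matrix (Fin 3) (Fin 3) ℂ →
      Matrix (Fin 3) (Fin 3) ℂ)
    (hU : ∀ X ∈ mSet, ∀ Y ∈ mSet, U X Y = U0 lam X Y) (a b c p q r : ℂ) :
    nablaU U z (Dm a b c) (Dm p q r) =
      Dm ((((z 0 + z 2) * (lam 1 - lam 2 - lam 0) / (2 * lam 0) : ℝ) : ℂ) *
            Complex.I * conj (b * r) +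
          (((z 0 + z 1) * (lam 1 - lam 2 + lam 0) / (2 * lam 0) : ℝ) : ℂ) *
            Complex.I * conj (c * q))
         ((((z 1 + z 2) * (lam 2 - lam 0 + lam 1) / (2 * lam 1) : ℝ) : ℂ) *
            Complex.I * conj (a * r) -
          (((z 0 + z 1) * (lam 1 - lam 2 + lam 0) / (2 * lam 1) : ℝ) : ℂ) *
            Complex.I * conj (c * p))
         (-((((z 1 + z 2) * (lam 2 - lam 0 + lam 1) / (2 * lam 2) : ℝ) : ℂ) *
            Complex.I * conj (a * q)) -
          (((z 0 + z 2) * (lam 1 - lam 2 - lam 0) / (2 * lam 2) : ℝ) : ℂ) *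
            Complex.I * conj (b * p)) := by
  have h0 : (lam 0 : ℝ) ≠ 0 := (hlam 0).ne'
  have h1 : (lam 1 : ℝ) ≠ 0 := (hlam 1).ne'
  have h2 : (lam 2 : ℝ) ≠ 0 := (hlam 2).ne'
  simp only [nablaU, alphaU]
  rw [fm_Dm z p q r,
    hU _ (Dm_mem_mSet a b c) _ (Dm_mem_mSet _ _ _),
    hU _ (Dm_mem_mSet a b c) _ (Dm_mem_mSet p q r),
    U0_Dm, U0_Dm, projm_bracket_Dm, projm_bracket_Dm,
    Dm_smul, Dm_smul, Dm_add, Dm_add, fm_Dm, Dm_sub]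
  refine Dm_congr ?_ ?_ ?_ <;>
    · simp only [_root_.map_mul, map_add, map_sub, Complex.conj_ofReal, Complex.conj_I,
        Complex.conj_conj, Complex.ofReal_div, Complex.ofReal_mul, Complex.ofReal_add,
        Complex.ofReal_sub, Complex.ofReal_ofNat]
      field_simp [Complex.ofReal_ne_zero.mpr h0, Complex.ofReal_ne_zero.mpr h1,
        Complex.ofReal_ne_zero.mpr h2]
      push_cast
      ring

lemma arith (z : Fin 3 → ℝ) (hz : ∀ j, z j = -1 ∨ z j = 0 ∨ z j = 1)
    (hz0 : ¬(z 0 = 0 ∧ z 1 = 0 ∧ z 2 = 0))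
    (lam : Fin 3 → ℝ) (hlam : ∀ j, 0 < lam j) :
    ((z 0 + z 2) * (lam 1 - lam 2 - lam 0) = 0 ∧
     (z 0 + z 1) * (lam 1 - lam 2 + lam 0) = 0 ∧
     (z 1 + z 2) * (lam 2 - lam 0 + lam 1) = 0) ↔
      ((((z 0 = 1 ∧ z 1 = -1 ∧ z 2 = 1) ∨ (z 0 = -1 ∧ z 1 = 1 ∧ z 2 = -1)) ∧
          lam 0 < lam 1 ∧ lam 2 = lam 1 - lam 0) ∨
      (((z 0 = 1 ∧ z 1 = 1 ∧ z 2 = -1) ∨ (z 0 = -1 ∧ z 1 = -1 ∧ z 2 = 1)) ∧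
          lam 2 = lam 0 + lam 1) ∨
      (((z 0 = 1 ∧ z 1 = -1 ∧ z 2 = -1) ∨ (z 0 = -1 ∧ z 1 = 1 ∧ z 2 = 1)) ∧
          lam 1 < lam 0 ∧ lam 2 = lam 0 - lam 1)) := by
  have l0 := hlam 0; have l1 := hlam 1; have l2 := hlam 2
  rcases hz 0 with h0 | h0 | h0 <;> rcases hz 1 with h1 | h1 | h1 <;>
    rcases hz 2 with h2 | h2 | h2 <;>
    simp only [h0, h1, h2, and_self, not_true_eq_false] at hz0 ⊢ <;> norm_num at hz0 ⊢ <;>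
    first
      | (rintro e1 e2 e3; linarith)
      | (rintro e1 e2; linarith)
      | (rintro e1; linarith)
      | (constructor <;> intro h <;>
          first
            | (refine ⟨by linarith [h.1, h.2.1, h.2.2], by linarith [h.1, h.2.1, h.2.2],
                by linarith [h.1, h.2.1, h.2.2]⟩)
            | (refine ⟨by linarith [h.1, h.2.1, h.2.2], by linarith [h.1, h.2.1, h.2.2]⟩)
            | (refine ⟨by linarith [h.1, h.2], by linarith [h.1, h.2],
                by linarith [h.1, h.2]⟩)
            | (refine ⟨by linarith [h.1, h.2], by linarith [h.1, h.2]⟩)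
            | (refine ⟨by linarith [h], by linarith [h], by linarith [h]⟩)
            | (refine ⟨by linarith [h], by linarith [h]⟩)
            | linarith [h.1, h.2.1, h.2.2]
            | linarith [h.1, h.2]
            | linarith [h]
            | linarith)

lemma Dm_zero : Dm 0 0 0 = 0 := by
  ext i j; fin_cases i <;> fin_cases j <;>
    simp [Dm, Matrix.vecHead, Matrix.vecTail]

end

/-- Invariant Kähler f-structures on the flag manifold SU(3)/T_max:
∇f = 0 holds exactly for the characteristic collections ±(1,−1,1) with
λ₂ > λ₁, λ₃ = λ₂ − λ₁; ±(1,1,−1) with λ₃ = λ₁ + λ₂; ±(1,−1,−1) with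
λ₁ > λ₂, λ₃ = λ₁ − λ₂. In particular, there are no invariant Kähler
f-structures of rank 2 or 4. -/
theorem stmt_10 (z : Fin 3 → ℝ) (hz : ∀ j, z j = -1 ∨ z j = 0 ∨ z j = 1)
    (hz0 : ¬(z 0 = 0 ∧ z 1 = 0 ∧ z 2 = 0))
    (lam : Fin 3 → ℝ) (hlam : ∀ j, 0 < lam j)
    (U : Matrix (Fin 3) (Fin 3) ℂ → Matrix (Fin 3) (Fin 3) ℂ →
      Matrix (Fin 3) (Fin 3) ℂ)
    (hUmem : ∀ X ∈ mSet, ∀ Y ∈ mSet, U X Y ∈ mSet)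
    (hUsymm : ∀ X ∈ mSet, ∀ Y ∈ mSet, U X Y = U Y X)
    (hUdef : ∀ X ∈ mSet, ∀ Y ∈ mSet, ∀ Z ∈ mSet,
      2 * gmet lam (U X Y) Z =
        gmet lam X (projm ⁅Z, Y⁆) + gmet lam (projm ⁅Z, X⁆) Y) :
    ((∀ X ∈ mSet, ∀ Y ∈ mSet, nablaU U z X Y = 0) ↔
      (((z 0 = 1 ∧ z 1 = -1 ∧ z 2 = 1) ∨ (z 0 = -1 ∧ z 1 = 1 ∧ z 2 = -1)) ∧
          lam 0 < lam 1 ∧ lam 2 = lam 1 - lam 0) ∨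
      (((z 0 = 1 ∧ z 1 = 1 ∧ z 2 = -1) ∨ (z 0 = -1 ∧ z 1 = -1 ∧ z 2 = 1)) ∧
          lam 2 = lam 0 + lam 1) ∨
      (((z 0 = 1 ∧ z 1 = -1 ∧ z 2 = -1) ∨ (z 0 = -1 ∧ z 1 = 1 ∧ z 2 = 1)) ∧
          lam 1 < lam 0 ∧ lam 2 = lam 0 - lam 1)) ∧
    ((z 0 = 0 ∨ z 1 = 0 ∨ z 2 = 0) →
      ¬(∀ X ∈ mSet, ∀ Y ∈ mSet, nablaU U z X Y = 0)) := by
  have hU := Uval lam hlam U hUmem hUdef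
  have h20 : (2 : ℝ) * lam 0 ≠ 0 := mul_ne_zero two_ne_zero (hlam 0).ne'
  have h21 : (2 : ℝ) * lam 1 ≠ 0 := mul_ne_zero two_ne_zero (hlam 1).ne'
  have key : (∀ X ∈ mSet, ∀ Y ∈ mSet, nablaU U z X Y = 0) ↔
      ((z 0 + z 2) * (lam 1 - lam 2 - lam 0) = 0 ∧
       (z 0 + z 1) * (lam 1 - lam 2 + lam 0) = 0 ∧
       (z 1 + z 2) * (lam 2 - lam 0 + lam 1) = 0) := by
    constructor
    · intro h
      have extract : ∀ (x y : ℝ), ((x / y : ℝ) : ℂ) * Complex.I = 0 → y ≠ 0 → x = 0 := by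
        intro x y hxy hy
        have hx : ((x / y : ℝ) : ℂ) = 0 := by
          rcases mul_eq_zero.mp hxy with h' | h'
          · exact h'
          · exact absurd h' Complex.I_ne_zero
        have := Complex.ofReal_eq_zero.mp hx
        rcases div_eq_zero_iff.mp this with h' | h'
        · exact h'
        · exact absurd h' hy
      refine ⟨?_, ?_, ?_⟩
      · have h1 := h _ (Dm_mem_mSet 0 1 0) _ (Dm_mem_mSet 0 0 1)
        rw [nabla_Dm z lam hlam U hU] at h1
        have e := (Dm_eq_zero h1).1
        simp only [mul_one, one_mul, mul_zero, zero_mul, _root_.map_one, map_zero,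
          add_zero, zero_add] at e
        exact extract _ _ e h20
      · have h1 := h _ (Dm_mem_mSet 0 0 1) _ (Dm_mem_mSet 0 1 0)
        rw [nabla_Dm z lam hlam U hU] at h1
        have e := (Dm_eq_zero h1).1
        simp only [mul_one, one_mul, mul_zero, zero_mul, _root_.map_one, map_zero,
          add_zero, zero_add] at e
        exact extract _ _ e h20
      · have h1 := h _ (Dm_mem_mSet 1 0 0) _ (Dm_mem_mSet 0 0 1)
        rw [nabla_Dm z lam hlam U hU] at h1
        have e := (Dm_eq_zero h1).2.1
        simp only [mul_one, one_mul, mul_zero, zero_mul, _root_.map_one, map_zero,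
          add_zero, zero_add, sub_zero, zero_sub, neg_eq_zero] at e
        exact extract _ _ e h21
    · rintro ⟨e1, e2, e3⟩ X ⟨a, b, c, rfl⟩ Y ⟨p, q, r, rfl⟩
      rw [nabla_Dm z lam hlam U hU, e1, e2, e3]
      simp only [zero_div, Complex.ofReal_zero, zero_mul, add_zero, sub_zero,
        zero_sub, neg_zero, zero_add, neg_neg]
      exact Dm_zero
  constructor
  · exact key.trans (arith z hz hz0 lam hlam)
  · intro hzz hall
    have hbig := (arith z hz hz0 lam hlam).mp (key.mp hall)
    rcases hzz with h | h | h <;>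
      rcases hbig with ⟨⟨a1, a2, a3⟩ | ⟨a1, a2, a3⟩, _⟩ | ⟨⟨a1, a2, a3⟩ | ⟨a1, a2, a3⟩, _⟩ |
        ⟨⟨a1, a2, a3⟩ | ⟨a1, a2, a3⟩, _⟩ <;>
      first
        | (rw [h] at a1; norm_num at a1)
        | (rw [h] at a2; norm_num at a2)
        | (rw [h] at a3; norm_num at a3)
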